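/- For 0 < T < T_c and k ∈ ℝ, the difference K_{T_c}(k) - K_T(k) satisfies 0 ≤ K_{T_c}(k) - K_T(k) ≤ C·(T_c - T) for a constant C depending only on T and T_c, uniformly in k. In particular, it admits the integral representation K_{T_c}(k) - K_T(k) = ∫₀¹ [I_T k² / (2 sinh²(k/(2T_c) + t I_T k / 2))] dt with I_T = 1/T - 1/T_c. -/

import Mathlib

/-- `K_T(k) = k/tanh(k/(2T))`, extended by `2T` at `k = 0`. -/
noncomputable def KT (T k : ℝ) : ℝ :=
  if k = 0 then 2 * T else k / Real.tanh (k / (2 * T))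

lemma sq_le_sinh_sq (x : ℝ) : x ^ 2 ≤ Real.sinh x ^ 2 := by
  rcases le_or_gt 0 x with h | h
  · nlinarith [Real.self_le_sinh_iff.mpr h]
  · nlinarith [Real.sinh_le_self_iff.mpr h.le, Real.sinh_nonpos_iff.mpr h.le]

lemma KT_repr (T Tc : ℝ) (hT : 0 < T) (hTTc : T < Tc) (k : ℝ) (hk : k ≠ 0) :
    KT Tc k - KT T k =
      ∫ t in (0:ℝ)..1,
        (1 / T - 1 / Tc) * k ^ 2 /
          (2 * Real.sinh (k / (2 * Tc) + t * (1 / T - 1 / Tc) * k / 2) ^ 2) := by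
  have hTc : (0:ℝ) < Tc := hT.trans hTTc
  have hI : 0 < 1 / T - 1 / Tc := by
    have := one_div_lt_one_div_of_lt hT hTTc
    linarith
  set c : ℝ → ℝ := fun t => k / (2 * Tc) + t * (1 / T - 1 / Tc) * k / 2 with hc
  have hcne : ∀ t ∈ Set.uIcc (0:ℝ) 1, c t ≠ 0 := by
    intro t ht
    rw [Set.uIcc_of_le (by norm_num)] at ht
    have ht0 : 0 ≤ t := ht.1
    have hfac : 0 < 1 / (2 * Tc) + t * (1 / T - 1 / Tc) / 2 := by
      have : 0 ≤ t * (1 / T - 1 / Tc) / 2 := by positivity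
      have : 0 < 1 / (2 * Tc) := by positivity
      linarith
    have : c t = k * (1 / (2 * Tc) + t * (1 / T - 1 / Tc) / 2) := by
      simp only [hc]; ring
    rw [this]
    exact mul_ne_zero hk (ne_of_gt hfac)
  have hderiv : ∀ t ∈ Set.uIcc (0:ℝ) 1,
      HasDerivAt (fun t => k * Real.cosh (c t) / Real.sinh (c t))
        (-((1 / T - 1 / Tc) * k ^ 2 /
          (2 * Real.sinh (c t) ^ 2))) t := by
    intro t ht
    have hsne : Real.sinh (c t) ≠ 0 := Real.sinh_ne_zero.mpr (hcne t ht)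
    have hcderiv : HasDerivAt c ((1 / T - 1 / Tc) * k / 2) t := by
      have h1 : HasDerivAt (fun s : ℝ => k / (2 * Tc) + s * ((1 / T - 1 / Tc) * k / 2))
          ((1 / T - 1 / Tc) * k / 2) t := by
        simpa using ((hasDerivAt_id t).mul_const ((1 / T - 1 / Tc) * k / 2)).const_add
          (k / (2 * Tc))
      convert h1 using 2 with s
      simp only [hc]; ring
    have hcosh : HasDerivAt (fun t => k * Real.cosh (c t))
        (k * (Real.sinh (c t) * ((1 / T - 1 / Tc) * k / 2))) t :=
      ((Real.hasDerivAt_cosh (c t)).comp t hcderiv).const_mul k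
    have hsinh : HasDerivAt (fun t => Real.sinh (c t))
        (Real.cosh (c t) * ((1 / T - 1 / Tc) * k / 2)) t :=
      (Real.hasDerivAt_sinh (c t)).comp t hcderiv
    have := hcosh.div hsinh hsne
    refine this.congr_deriv ?_
    have hid : Real.cosh (c t) ^ 2 - Real.sinh (c t) ^ 2 = 1 := Real.cosh_sq_sub_sinh_sq (c t)
    have hnum : k * (Real.sinh (c t) * ((1 / T - 1 / Tc) * k / 2)) * Real.sinh (c t) -
        k * Real.cosh (c t) * (Real.cosh (c t) * ((1 / T - 1 / Tc) * k / 2)) =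
        -(k * ((1 / T - 1 / Tc) * k / 2)) := by
      linear_combination (-(k * ((1 / T - 1 / Tc) * k / 2))) * hid
    rw [hnum]
    field_simp
  have hcont : ContinuousOn
      (fun t => -((1 / T - 1 / Tc) * k ^ 2 / (2 * Real.sinh (c t) ^ 2)))
      (Set.uIcc (0:ℝ) 1) := by
    apply ContinuousOn.neg
    apply ContinuousOn.div continuousOn_const
    · fun_prop
    · intro t ht
      have hsne : Real.sinh (c t) ≠ 0 := Real.sinh_ne_zero.mpr (hcne t ht)
      positivity
  have hint : IntervalIntegrable
      (fun t => -((1 / T - 1 / Tc) * k ^ 2 / (2 * Real.sinh (c t) ^ 2)))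
      MeasureTheory.volume 0 1 := hcont.intervalIntegrable
  have hFTC := intervalIntegral.integral_eq_sub_of_hasDerivAt hderiv hint
  have h0 : Set.uIcc (0:ℝ) 1 = Set.Icc 0 1 := Set.uIcc_of_le (by norm_num)
  -- identify endpoints
  have hc0 : c 0 = k / (2 * Tc) := by simp [hc]
  have hc1 : c 1 = k / (2 * T) := by
    simp only [hc]
    field_simp
    ring
  have hKTc : KT Tc k = k * Real.cosh (c 0) / Real.sinh (c 0) := by
    rw [KT, if_neg hk, hc0, Real.tanh_eq_sinh_div_cosh]
    have hco : Real.cosh (k / (2 * Tc)) ≠ 0 := (Real.cosh_pos _).ne'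
    field_simp
  have hKT : KT T k = k * Real.cosh (c 1) / Real.sinh (c 1) := by
    rw [KT, if_neg hk, hc1, Real.tanh_eq_sinh_div_cosh]
    have hco : Real.cosh (k / (2 * T)) ≠ 0 := (Real.cosh_pos _).ne'
    field_simp
  rw [hKTc, hKT]
  rw [intervalIntegral.integral_congr (g := fun t =>
    -(-((1 / T - 1 / Tc) * k ^ 2 / (2 * Real.sinh (c t) ^ 2)))) (by intro t ht; simp [hc])]
  rw [intervalIntegral.integral_neg, hFTC]
  ring

/-- For `0 < T < T_c`: `0 ≤ K_{T_c}(k) - K_T(k) ≤ C·(T_c - T)` for a constant `C`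
depending only on `T` and `T_c`, uniformly in `k`; and for `k ≠ 0` the difference
admits the integral representation
`∫₀¹ I_T k² / (2 sinh²(k/(2T_c) + t I_T k/2)) dt` with `I_T = 1/T - 1/T_c`. -/
theorem KT_difference_bounds (T Tc : ℝ) (hT : 0 < T) (hTTc : T < Tc) :
    (∃ C : ℝ, 0 < C ∧ ∀ k : ℝ,
        0 ≤ KT Tc k - KT T k ∧ KT Tc k - KT T k ≤ C * (Tc - T)) ∧
      ∀ k : ℝ, k ≠ 0 →
        KT Tc k - KT T k =
          ∫ t in (0:ℝ)..1,
            (1 / T - 1 / Tc) * k ^ 2 /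
              (2 * Real.sinh (k / (2 * Tc) + t * (1 / T - 1 / Tc) * k / 2) ^ 2) := by
  have hTc : (0:ℝ) < Tc := hT.trans hTTc
  have hI : 0 < 1 / T - 1 / Tc := by
    have := one_div_lt_one_div_of_lt hT hTTc
    linarith
  refine ⟨⟨2 * Tc / T, by positivity, fun k => ?_⟩, fun k hk => KT_repr T Tc hT hTTc k hk⟩
  rcases eq_or_ne k 0 with rfl | hk
  · constructor
    · norm_num [KT]; linarith
    · norm_num [KT]
      rw [← sub_le_iff_le_add, div_mul_eq_mul_div, le_div_iff₀ hT]
      nlinarith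
  · rw [KT_repr T Tc hT hTTc k hk]
    set f : ℝ → ℝ := fun t =>
      (1 / T - 1 / Tc) * k ^ 2 /
        (2 * Real.sinh (k / (2 * Tc) + t * (1 / T - 1 / Tc) * k / 2) ^ 2) with hf
    have hsq : ∀ t ∈ Set.Icc (0:ℝ) 1,
        k ^ 2 / (4 * Tc ^ 2) ≤ Real.sinh (k / (2 * Tc) + t * (1 / T - 1 / Tc) * k / 2) ^ 2 := by
      intro t ht
      set x := k / (2 * Tc) + t * (1 / T - 1 / Tc) * k / 2 with hx
      have h1 : x ^ 2 ≤ Real.sinh x ^ 2 := sq_le_sinh_sq x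
      have h2 : k ^ 2 / (4 * Tc ^ 2) ≤ x ^ 2 := by
        have hfac : 1 / (2 * Tc) ≤ 1 / (2 * Tc) + t * (1 / T - 1 / Tc) / 2 := by
          nlinarith [ht.1]
        have hx2 : x ^ 2 = k ^ 2 * (1 / (2 * Tc) + t * (1 / T - 1 / Tc) / 2) ^ 2 := by
          rw [hx]; ring
        rw [hx2]
        have h3 : (1 / (2 * Tc)) ^ 2 ≤ (1 / (2 * Tc) + t * (1 / T - 1 / Tc) / 2) ^ 2 :=
          pow_le_pow_left₀ (by positivity) hfac 2
        calc k ^ 2 / (4 * Tc ^ 2) = k ^ 2 * (1 / (2 * Tc)) ^ 2 := by field_simp; ring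
          _ ≤ _ := by nlinarith [sq_nonneg k]
      exact h2.trans h1
    have hsinhne : ∀ t ∈ Set.Icc (0:ℝ) 1,
        0 < Real.sinh (k / (2 * Tc) + t * (1 / T - 1 / Tc) * k / 2) ^ 2 := by
      intro t ht
      have := hsq t ht
      have hk2 : 0 < k ^ 2 / (4 * Tc ^ 2) := by positivity
      linarith
    have hfnonneg : ∀ t ∈ Set.Icc (0:ℝ) 1, 0 ≤ f t := by
      intro t ht
      have := hsinhne t ht
      positivity
    have hfcont : ContinuousOn f (Set.uIcc (0:ℝ) 1) := by
      rw [Set.uIcc_of_le (by norm_num : (0:ℝ) ≤ 1)]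
      apply ContinuousOn.div continuousOn_const
      · fun_prop
      · intro t ht
        exact ne_of_gt (by have := hsinhne t ht; linarith)
    have hfint : IntervalIntegrable f MeasureTheory.volume 0 1 := hfcont.intervalIntegrable
    constructor
    · apply intervalIntegral.integral_nonneg (by norm_num)
      intro u hu
      exact hfnonneg u hu
    · have hbd : ∀ t ∈ Set.Icc (0:ℝ) 1, f t ≤ 2 * Tc / T * (Tc - T) := by
        intro t ht
        have h1 := hsq t ht
        have h2 := hsinhne t ht
        have hk2 : 0 < k ^ 2 / (4 * Tc ^ 2) := by positivity
        have hnum : 0 ≤ (1 / T - 1 / Tc) * k ^ 2 := by positivity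
        have : f t ≤ (1 / T - 1 / Tc) * k ^ 2 / (2 * (k ^ 2 / (4 * Tc ^ 2))) := by
          apply div_le_div_of_nonneg_left hnum (by linarith) (by linarith)
        refine this.trans ?_
        rw [div_le_iff₀ (by positivity)]
        have hkne2 : k ^ 2 ≠ 0 := pow_ne_zero 2 hk
        field_simp
        norm_num
      calc ∫ t in (0:ℝ)..1, f t ≤ ∫ _t in (0:ℝ)..1, 2 * Tc / T * (Tc - T) := by
            apply intervalIntegral.integral_mono_on (by norm_num) hfint
              intervalIntegrable_const hbd
        _ = 2 * Tc / T * (Tc - T) := by simp
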